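/- Let d ≥ 1 be an integer and let G : (0,∞) × ℝ^d → ℝ satisfy the scaling property G(t,x) = t^{γ₁} · G(1, x / t^{γ₂}) for all t > 0 and x ∈ ℝ^d, for some constants γ₁ ∈ ℝ and γ₂ ≥ 1/2, and suppose C₀ := sup_{x ∈ ℝ^d} G(1,x)² / 𝒢_g(1,x) is finite. Then with σ = −(2γ₁ + d·γ₂): (a) G(t,x)² ≤ C₀ · t^{−σ} · 𝒢_g(t^{2γ₂}, x) for all t > 0, x ∈ ℝ^d; and (b) ∫_{ℝ^d} 𝒢_g(t^{2γ₂}, x−y) · 𝒢_g(s^{2γ₂}, y) dy ≤ 2^{d(γ₂ − 1/2)} · 𝒢_g((t+s)^{2γ₂}, x) for all t, s > 0 and x ∈ ℝ^d. -/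

import Mathlib

open MeasureTheory

/-- The Gaussian reference kernel `𝒢_g(t,x) = (4π t)^{−d/2} exp(−|x|²/(4t))` on `ℝ^d`. -/
noncomputable def gaussKernel (d : ℕ) (t : ℝ) (x : Fin d → ℝ) : ℝ :=
  (4 * Real.pi * t) ^ (-(d : ℝ) / 2) * Real.exp (-(∑ i, x i ^ 2) / (4 * t))

noncomputable def oneK (t u : ℝ) : ℝ :=
  (4 * Real.pi * t) ^ (-(1:ℝ) / 2) * Real.exp (-(u ^ 2) / (4 * t))

lemma gk_prod (d : ℕ) {t : ℝ} (ht : 0 < t) (x : Fin d → ℝ) :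
    gaussKernel d t x = ∏ i, oneK t (x i) := by
  unfold gaussKernel oneK
  rw [Finset.prod_mul_distrib, Finset.prod_const, ← Real.exp_sum]
  congr 1
  · rw [← Real.rpow_natCast ((4 * Real.pi * t) ^ (-(1:ℝ)/2)) _, ← Real.rpow_mul (by positivity)]
    congr 1
    simp
    ring
  · congr 1
    rw [neg_div, Finset.sum_div, ← Finset.sum_neg_distrib]
    simp [neg_div]

lemma oneK_conv {a b : ℝ} (ha : 0 < a) (hb : 0 < b) (u : ℝ) :
    ∫ y : ℝ, oneK a (u - y) * oneK b y = oneK (a + b) u := by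
  have hab : 0 < a + b := by linarith
  set c := (a + b) / (4 * a * b) with hc
  have hcpos : 0 < c := by positivity
  set m := b * u / (a + b) with hm
  have key : ∀ y : ℝ, oneK a (u - y) * oneK b y
      = ((4 * Real.pi * a) ^ (-(1:ℝ)/2) * (4 * Real.pi * b) ^ (-(1:ℝ)/2)
          * Real.exp (-(u ^ 2) / (4 * (a + b)))) * Real.exp (-c * (y - m) ^ 2) := by
    intro y
    unfold oneK
    rw [mul_mul_mul_comm, ← Real.exp_add]
    rw [mul_assoc ((4 * Real.pi * a) ^ (-(1:ℝ)/2) * (4 * Real.pi * b) ^ (-(1:ℝ)/2)), ← Real.exp_add]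
    congr 1
    rw [hc, hm]
    congr 1
    field_simp
    ring
  simp_rw [key]
  rw [MeasureTheory.integral_const_mul _ _,
    integral_sub_right_eq_self (fun z => Real.exp (-c * z ^ 2)) m, integral_gaussian]
  have h2 : ∀ z : ℝ, 0 < z → z ^ (-(1:ℝ)/2) = (Real.sqrt z)⁻¹ := by
    intro z hz
    rw [neg_div, Real.rpow_neg hz.le, Real.sqrt_eq_rpow]
  have hconst : (4 * Real.pi * a) ^ (-(1:ℝ)/2) * (4 * Real.pi * b) ^ (-(1:ℝ)/2)
      * Real.sqrt (Real.pi / c) = (4 * Real.pi * (a + b)) ^ (-(1:ℝ)/2) := by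
    rw [h2 _ (by positivity), h2 _ (by positivity), h2 _ (by positivity),
      ← Real.sqrt_inv, ← Real.sqrt_inv, ← Real.sqrt_inv,
      ← Real.sqrt_mul (by positivity), ← Real.sqrt_mul (by positivity)]
    congr 1
    rw [hc]
    have hπ := Real.pi_pos
    field_simp
  unfold oneK
  rw [← hconst]
  ring

lemma gk_conv (d : ℕ) {a b : ℝ} (ha : 0 < a) (hb : 0 < b) (x : Fin d → ℝ) :
    ∫ y : Fin d → ℝ, gaussKernel d a (x - y) * gaussKernel d b y
      = gaussKernel d (a + b) x := by
  have hab : 0 < a + b := by linarith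
  have : ∀ y : Fin d → ℝ, gaussKernel d a (x - y) * gaussKernel d b y
      = ∏ i, (fun i (v : ℝ) => oneK a (x i - v) * oneK b v) i (y i) := by
    intro y
    rw [gk_prod d ha, gk_prod d hb, ← Finset.prod_mul_distrib]
    simp [Pi.sub_apply]
  simp_rw [this]
  rw [MeasureTheory.integral_fintype_prod_volume_eq_prod
    (fun i (v : ℝ) => oneK a (x i - v) * oneK b v)]
  rw [gk_prod d hab]
  exact Finset.prod_congr rfl fun i _ => oneK_conv ha hb (x i)

lemma gk_pos (d : ℕ) {t : ℝ} (ht : 0 < t) (x : Fin d → ℝ) : 0 < gaussKernel d t x := by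
  unfold gaussKernel
  positivity

lemma gk_le (d : ℕ) {A B : ℝ} (hA : 0 < A) (hAB : A ≤ B) (x : Fin d → ℝ) :
    gaussKernel d A x ≤ (B / A) ^ ((d : ℝ) / 2) * gaussKernel d B x := by
  have hB : 0 < B := hA.trans_le hAB
  have hS : (0:ℝ) ≤ ∑ i, x i ^ 2 := by positivity
  have e1 : A / B * (4 * Real.pi * B) = 4 * Real.pi * A := by field_simp
  have h1 : (4 * Real.pi * A) ^ (-(d:ℝ)/2)
      = (B / A) ^ ((d:ℝ)/2) * (4 * Real.pi * B) ^ (-(d:ℝ)/2) := by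
    rw [← e1, Real.mul_rpow (by positivity) (by positivity)]
    congr 1
    rw [neg_div, Real.rpow_neg (by positivity), ← Real.inv_rpow (by positivity), inv_div]
  unfold gaussKernel
  rw [h1, mul_assoc]
  have hexp : Real.exp (-(∑ i, x i ^ 2) / (4 * A)) ≤ Real.exp (-(∑ i, x i ^ 2) / (4 * B)) := by
    apply Real.exp_le_exp.2
    rw [neg_div, neg_div, neg_le_neg_iff]
    gcongr
  gcongr

/-- if `G(t,x) = t^{γ₁} G(1, x/t^{γ₂})` with `γ₂ ≥ 1/2`, and
`C₀ = sup_x G(1,x)²/𝒢_g(1,x)` is finite, then with `σ = −(2γ₁ + dγ₂)`: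
(a) `G(t,x)² ≤ C₀ t^{−σ} 𝒢_g(t^{2γ₂}, x)`; and
(b) `∫ 𝒢_g(t^{2γ₂}, x−y) 𝒢_g(s^{2γ₂}, y) dy ≤ 2^{d(γ₂−1/2)} 𝒢_g((t+s)^{2γ₂}, x)`. -/
theorem gaussian_reference_kernel (d : ℕ) (hd : 1 ≤ d)
    (G : ℝ → (Fin d → ℝ) → ℝ) (γ₁ γ₂ : ℝ) (hγ₂ : 1 / 2 ≤ γ₂)
    (hscal : ∀ t : ℝ, 0 < t → ∀ x, G t x = t ^ γ₁ * G 1 ((t ^ γ₂)⁻¹ • x))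
    (hbdd : BddAbove (Set.range fun x : Fin d → ℝ => G 1 x ^ 2 / gaussKernel d 1 x))
    (C₀ σ : ℝ)
    (hC₀ : C₀ = ⨆ x : Fin d → ℝ, G 1 x ^ 2 / gaussKernel d 1 x)
    (hσ : σ = -(2 * γ₁ + (d : ℝ) * γ₂)) :
    (∀ t : ℝ, 0 < t → ∀ x : Fin d → ℝ,
      G t x ^ 2 ≤ C₀ * t ^ (-σ) * gaussKernel d (t ^ (2 * γ₂)) x) ∧
    (∀ t s : ℝ, 0 < t → 0 < s → ∀ x : Fin d → ℝ,
      (∫ y : Fin d → ℝ, gaussKernel d (t ^ (2 * γ₂)) (x - y) * gaussKernel d (s ^ (2 * γ₂)) y)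
        ≤ (2 : ℝ) ^ ((d : ℝ) * (γ₂ - 1 / 2)) * gaussKernel d ((t + s) ^ (2 * γ₂)) x) := by
  constructor
  · -- part (a)
    intro t ht x
    have hp : (0:ℝ) < t ^ γ₂ := Real.rpow_pos_of_pos ht _
    have hT : (0:ℝ) < t ^ (2 * γ₂) := Real.rpow_pos_of_pos ht _
    set y : Fin d → ℝ := (t ^ γ₂)⁻¹ • x with hy
    have hsq : G t x ^ 2 = t ^ (γ₁ * 2) * G 1 y ^ 2 := by
      rw [hscal t ht x, mul_pow, ← Real.rpow_natCast (t ^ γ₁) 2, ← Real.rpow_mul ht.le]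
      norm_num
      exact Or.inl rfl
    have hg := gk_pos d one_pos y
    have hC : G 1 y ^ 2 ≤ C₀ * gaussKernel d 1 y := by
      have h : G 1 y ^ 2 / gaussKernel d 1 y ≤ C₀ := by
        rw [hC₀]; exact le_ciSup hbdd y
      calc G 1 y ^ 2 = G 1 y ^ 2 / gaussKernel d 1 y * gaussKernel d 1 y := by
            field_simp
        _ ≤ C₀ * gaussKernel d 1 y := mul_le_mul_of_nonneg_right h hg.le
    have e1 : (t ^ γ₂) ^ 2 = t ^ (2 * γ₂) := by
      rw [← Real.rpow_natCast (t ^ γ₂) 2, ← Real.rpow_mul ht.le]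
      norm_num [mul_comm]
    have e2 : ∑ i, y i ^ 2 = (∑ i, x i ^ 2) / t ^ (2 * γ₂) := by
      rw [hy]
      simp only [Pi.smul_apply, smul_eq_mul, mul_pow, ← Finset.mul_sum]
      rw [inv_pow, e1, div_eq_inv_mul]
    have h4 : t ^ (-σ) * t ^ (2 * γ₂ * (-(d : ℝ) / 2)) = t ^ (γ₁ * 2) := by
      rw [← Real.rpow_add ht]
      congr 1
      rw [hσ]; ring
    have heq : t ^ (γ₁ * 2) * (C₀ * gaussKernel d 1 y)
        = C₀ * t ^ (-σ) * gaussKernel d (t ^ (2 * γ₂)) x := by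
      unfold gaussKernel
      rw [e2,
        show (4 * Real.pi * t ^ (2 * γ₂) : ℝ) = 4 * Real.pi * 1 * t ^ (2 * γ₂) by ring,
        Real.mul_rpow (by positivity) hT.le, ← Real.rpow_mul ht.le,
        show -((∑ i, x i ^ 2) / t ^ (2 * γ₂)) / (4 * 1)
          = -(∑ i, x i ^ 2) / (4 * t ^ (2 * γ₂)) by
            rw [mul_one, neg_div, div_div, mul_comm (t ^ (2 * γ₂)) 4, neg_div],
        ← h4]
      ring
    calc G t x ^ 2 = t ^ (γ₁ * 2) * G 1 y ^ 2 := hsq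
      _ ≤ t ^ (γ₁ * 2) * (C₀ * gaussKernel d 1 y) :=
          mul_le_mul_of_nonneg_left hC (Real.rpow_nonneg ht.le _)
      _ = C₀ * t ^ (-σ) * gaussKernel d (t ^ (2 * γ₂)) x := heq
  · -- part (b)
    intro t s ht hs x
    have hp1 : (1:ℝ) ≤ 2 * γ₂ := by linarith
    have hA : (0:ℝ) < t ^ (2 * γ₂) := Real.rpow_pos_of_pos ht _
    have hB : (0:ℝ) < s ^ (2 * γ₂) := Real.rpow_pos_of_pos hs _
    have hts : (0:ℝ) < t + s := by linarith
    have hCc : (0:ℝ) < (t + s) ^ (2 * γ₂) := Real.rpow_pos_of_pos hts _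
    rw [gk_conv d hA hB x]
    have hle1 : t ^ (2 * γ₂) + s ^ (2 * γ₂) ≤ (t + s) ^ (2 * γ₂) := by
      have h := NNReal.coe_le_coe.2 (NNReal.add_rpow_le_rpow_add t.toNNReal s.toNNReal hp1)
      push_cast at h
      rwa [Real.coe_toNNReal t ht.le, Real.coe_toNNReal s hs.le] at h
    have hle2 : (t + s) ^ (2 * γ₂)
        ≤ 2 ^ (2 * γ₂ - 1) * (t ^ (2 * γ₂) + s ^ (2 * γ₂)) := by
      have h := NNReal.coe_le_coe.2
        (NNReal.rpow_add_le_mul_rpow_add_rpow t.toNNReal s.toNNReal hp1)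
      push_cast at h
      rwa [Real.coe_toNNReal t ht.le, Real.coe_toNNReal s hs.le] at h
    have hAB : (0:ℝ) < t ^ (2 * γ₂) + s ^ (2 * γ₂) := by linarith
    have hq : (t + s) ^ (2 * γ₂) / (t ^ (2 * γ₂) + s ^ (2 * γ₂)) ≤ 2 ^ (2 * γ₂ - 1) :=
      (div_le_iff₀ hAB).2 hle2
    have h2 : ((2:ℝ) ^ (2 * γ₂ - 1)) ^ ((d : ℝ) / 2) = 2 ^ ((d : ℝ) * (γ₂ - 1 / 2)) := by
      rw [← Real.rpow_mul (by norm_num : (0:ℝ) ≤ 2)]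
      congr 1
      ring
    calc gaussKernel d (t ^ (2 * γ₂) + s ^ (2 * γ₂)) x
        ≤ ((t + s) ^ (2 * γ₂) / (t ^ (2 * γ₂) + s ^ (2 * γ₂))) ^ ((d : ℝ) / 2)
            * gaussKernel d ((t + s) ^ (2 * γ₂)) x := gk_le d hAB hle1 x
      _ ≤ (2 : ℝ) ^ ((d : ℝ) * (γ₂ - 1 / 2)) * gaussKernel d ((t + s) ^ (2 * γ₂)) x := by
          apply mul_le_mul_of_nonneg_right _ (gk_pos d hCc x).le
          rw [← h2]
          exact Real.rpow_le_rpow (by positivity) hq (by positivity)
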